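/- Let Θ be a finite set, let p₁, …, p_m be strictly positive probability mass functions on Θ (priors) with weights β₁, …, β_m ≥ 0 summing to 1, let l₁, …, l_n be strictly positive probability mass functions on Θ (likelihood distributions), and let α₁, α₂ ≥ 0 and α₃ ∈ ℝ with α₃ < α₁ + α₂. Then the unique minimizer over probability mass functions q of α₃·Ent(q) + α₁·Σᵢ βᵢ·KL(q‖pᵢ) + (α₂/n)·Σᵢ KL(q‖lᵢ) is q*(θ) ∝ [Πᵢ pᵢ(θ)^{βᵢ}]^{α₁/(α₁+α₂−α₃)} · [Πᵢ lᵢ(θ)^{1/n}]^{α₂/(α₁+α₂−α₃)}. -/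

import Mathlib

open Real BigOperators


private lemma gibbs_pointwise' {a b : ℝ} (ha : 0 ≤ a) (hb : 0 < b) :
    a - b ≤ a * Real.log (a / b) ∧ (a * Real.log (a / b) = a - b → a = b) := by
  rcases eq_or_lt_of_le ha with h0 | h0
  · constructor
    · simp [← h0]; linarith
    · intro h; simp [← h0] at h; linarith
  · have hdiv : 0 < b / a := div_pos hb h0
    have hle : Real.log (b / a) ≤ b / a - 1 := Real.log_le_sub_one_of_pos hdiv
    have hlog : Real.log (a / b) = - Real.log (b / a) := by
      rw [← Real.log_inv, inv_div]
    have hab : a * (b / a - 1) = b - a := by field_simp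
    constructor
    · rw [hlog]
      nlinarith [mul_le_mul_of_nonneg_left hle h0.le]
    · intro h
      by_contra hne
      have hne1 : b / a ≠ 1 := by
        intro h1; exact hne ((div_eq_one_iff_eq h0.ne').mp h1).symm
      have hlt : Real.log (b / a) < b / a - 1 := Real.log_lt_sub_one_of_pos hdiv hne1
      rw [hlog] at h
      nlinarith [mul_lt_mul_of_pos_left hlt h0]

/-- Gibbs' inequality with equality case, for positive reference `w`. -/
private lemma gibbs' {Θ : Type*} [Fintype Θ] (q w : Θ → ℝ)
    (hq : ∀ θ, 0 ≤ q θ) (hw : ∀ θ, 0 < w θ) (hsum : ∑ θ, q θ = ∑ θ, w θ) :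
    0 ≤ ∑ θ, q θ * Real.log (q θ / w θ) ∧
    (∑ θ, q θ * Real.log (q θ / w θ) = 0 → q = w) := by
  set f : Θ → ℝ := fun θ => q θ * Real.log (q θ / w θ) - (q θ - w θ) with hf
  have hf0 : ∀ θ, 0 ≤ f θ := fun θ => by
    have := (gibbs_pointwise' (hq θ) (hw θ)).1; simp only [hf]; linarith
  have hsumf : ∑ θ, f θ = ∑ θ, q θ * Real.log (q θ / w θ) := by
    simp only [hf]
    rw [Finset.sum_sub_distrib, Finset.sum_sub_distrib, hsum]; ring
  constructor
  · rw [← hsumf]; exact Finset.sum_nonneg fun θ _ => hf0 θ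
  · intro h
    have hz : ∀ θ ∈ Finset.univ, f θ = 0 := by
      rw [← Finset.sum_eq_zero_iff_of_nonneg (fun θ _ => hf0 θ), hsumf, h]
    funext θ
    have := hz θ (Finset.mem_univ θ)
    have heq : q θ * Real.log (q θ / w θ) = q θ - w θ := by
      simp only [hf] at this; linarith
    exact (gibbs_pointwise' (hq θ) (hw θ)).2 heq

/-- Multi-prior, multi-sample generalized Bayes' rule on a finite set:
the unique minimizer over pmfs `q` of
`α₃·Ent(q) + α₁·Σᵢ βᵢ·KL(q‖pᵢ) + (α₂/n)·Σᵢ KL(q‖lᵢ)` is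
`q*(θ) ∝ [Πᵢ pᵢ(θ)^{βᵢ}]^{α₁/(α₁+α₂−α₃)} · [Πᵢ lᵢ(θ)^{1/n}]^{α₂/(α₁+α₂−α₃)}`. -/
theorem multi_prior_multi_sample_generalized_bayes
    {Θ : Type*} [Fintype Θ] [Nonempty Θ]
    {m n : ℕ} (hm : 0 < m) (hn : 0 < n)
    (p : Fin m → Θ → ℝ) (l : Fin n → Θ → ℝ)
    (hp : ∀ i θ, 0 < p i θ) (hl : ∀ i θ, 0 < l i θ)
    (hpsum : ∀ i, ∑ θ, p i θ = 1) (hlsum : ∀ i, ∑ θ, l i θ = 1)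
    (β : Fin m → ℝ) (hβ : ∀ i, 0 ≤ β i) (hβsum : ∑ i, β i = 1)
    (α₁ α₂ α₃ : ℝ) (hα₁ : 0 ≤ α₁) (hα₂ : 0 ≤ α₂) (hα₃ : α₃ < α₁ + α₂)
    (qstar : Θ → ℝ)
    (hqstar : qstar = fun θ =>
      ((∏ i, p i θ ^ β i) ^ (α₁ / (α₁ + α₂ - α₃)) *
        (∏ i, l i θ ^ ((1:ℝ) / n)) ^ (α₂ / (α₁ + α₂ - α₃))) /
      ∑ θ', (∏ i, p i θ' ^ β i) ^ (α₁ / (α₁ + α₂ - α₃)) *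
        (∏ i, l i θ' ^ ((1:ℝ) / n)) ^ (α₂ / (α₁ + α₂ - α₃)))
    (obj : (Θ → ℝ) → ℝ)
    (hobj : obj = fun q =>
      α₃ * (-∑ θ, q θ * Real.log (q θ)) +
      α₁ * (∑ i, β i * ∑ θ, q θ * Real.log (q θ / p i θ)) +
      (α₂ / n) * (∑ i, ∑ θ, q θ * Real.log (q θ / l i θ))) :
    (∀ q : Θ → ℝ, (∀ θ, 0 ≤ q θ) → ∑ θ, q θ = 1 → obj qstar ≤ obj q) ∧
    (∀ q : Θ → ℝ, (∀ θ, 0 ≤ q θ) → ∑ θ, q θ = 1 →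
      obj q = obj qstar → q = qstar) := by
  set c : ℝ := α₁ + α₂ - α₃ with hcdef
  have hc : 0 < c := by simp only [hcdef]; linarith
  set w : Θ → ℝ := fun θ =>
    (∏ i, p i θ ^ β i) ^ (α₁ / c) * (∏ i, l i θ ^ ((1:ℝ) / n)) ^ (α₂ / c) with hwdef
  have hw : ∀ θ, 0 < w θ := by
    intro θ
    exact mul_pos
      (Real.rpow_pos_of_pos (Finset.prod_pos fun i _ => Real.rpow_pos_of_pos (hp i θ) _) _)
      (Real.rpow_pos_of_pos (Finset.prod_pos fun i _ => Real.rpow_pos_of_pos (hl i θ) _) _)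
  set Z : ℝ := ∑ θ, w θ with hZdef
  have hZ : 0 < Z := Finset.sum_pos (fun θ _ => hw θ) Finset.univ_nonempty
  have hqw : qstar = fun θ => w θ / Z := by rw [hqstar]
  have hqpos : ∀ θ, 0 < qstar θ := by
    intro θ; rw [hqw]; exact div_pos (hw θ) hZ
  have hqsum : ∑ θ, qstar θ = 1 := by
    rw [hqw]; rw [← Finset.sum_div]; exact div_self hZ.ne'
  -- log of w
  have hlogw : ∀ θ, c * Real.log (w θ) =
      α₁ * ∑ i, β i * Real.log (p i θ) + (α₂ / n) * ∑ i, Real.log (l i θ) := by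
    intro θ
    have hpp : (0:ℝ) < ∏ i, p i θ ^ β i :=
      Finset.prod_pos fun i _ => Real.rpow_pos_of_pos (hp i θ) _
    have hll : (0:ℝ) < ∏ i, l i θ ^ ((1:ℝ)/n) :=
      Finset.prod_pos fun i _ => Real.rpow_pos_of_pos (hl i θ) _
    have h1 : Real.log (w θ) =
        (α₁ / c) * Real.log (∏ i, p i θ ^ β i) +
        (α₂ / c) * Real.log (∏ i, l i θ ^ ((1:ℝ)/n)) := by
      rw [hwdef]
      rw [Real.log_mul (Real.rpow_pos_of_pos hpp _).ne' (Real.rpow_pos_of_pos hll _).ne',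
        Real.log_rpow hpp, Real.log_rpow hll]
    have h2 : Real.log (∏ i, p i θ ^ β i) = ∑ i, β i * Real.log (p i θ) := by
      rw [Real.log_prod (fun i _ => (Real.rpow_pos_of_pos (hp i θ) _).ne')]
      exact Finset.sum_congr rfl fun i _ => Real.log_rpow (hp i θ) _
    have h3 : Real.log (∏ i, l i θ ^ ((1:ℝ)/n)) = (1/(n:ℝ)) * ∑ i, Real.log (l i θ) := by
      rw [Real.log_prod (fun i _ => (Real.rpow_pos_of_pos (hl i θ) _).ne'),
        Finset.mul_sum]
      exact Finset.sum_congr rfl fun i _ => Real.log_rpow (hl i θ) _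
    rw [h1, h2, h3]
    field_simp
  -- split lemma
  have hsplit : ∀ (q r : Θ → ℝ), (∀ θ, 0 ≤ q θ) → (∀ θ, 0 < r θ) →
      ∑ θ, q θ * Real.log (q θ / r θ) =
      (∑ θ, q θ * Real.log (q θ)) - ∑ θ, q θ * Real.log (r θ) := by
    intro q r hq hr
    rw [← Finset.sum_sub_distrib]
    refine Finset.sum_congr rfl fun θ _ => ?_
    by_cases h : q θ = 0
    · simp [h]
    · rw [Real.log_div h (hr θ).ne']; ring
  -- key identity
  have key : ∀ q : Θ → ℝ, (∀ θ, 0 ≤ q θ) → ∑ θ, q θ = 1 →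
      obj q = c * (∑ θ, q θ * Real.log (q θ / qstar θ)) - c * Real.log Z := by
    intro q hq hqs
    set S : ℝ := ∑ θ, q θ * Real.log (q θ) with hS
    set T : ℝ := ∑ θ, q θ * Real.log (w θ) with hT
    have h1 : ∀ i : Fin m, ∑ θ, q θ * Real.log (q θ / p i θ) =
        S - ∑ θ, q θ * Real.log (p i θ) := fun i => hsplit q (p i) hq (hp i)
    have h2 : ∀ i : Fin n, ∑ θ, q θ * Real.log (q θ / l i θ) =
        S - ∑ θ, q θ * Real.log (l i θ) := fun i => hsplit q (l i) hq (hl i)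
    -- LHS
    have hL : obj q = c * S
        - (α₁ * ∑ i, β i * ∑ θ, q θ * Real.log (p i θ)
           + (α₂ / n) * ∑ i, ∑ θ, q θ * Real.log (l i θ)) := by
      rw [hobj]
      simp only [h1, h2, mul_sub, Finset.sum_sub_distrib, ← Finset.sum_mul, hβsum,
        Finset.sum_const, Finset.card_univ, Fintype.card_fin, nsmul_eq_mul]
      have hn0 : (n:ℝ) ≠ 0 := Nat.cast_ne_zero.mpr hn.ne'
      field_simp
      ring
    -- c * T
    have hcT : c * T = α₁ * ∑ i, β i * ∑ θ, q θ * Real.log (p i θ)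
        + (α₂ / n) * ∑ i, ∑ θ, q θ * Real.log (l i θ) := by
      have e0 : c * T = ∑ θ, q θ * (c * Real.log (w θ)) := by
        rw [hT, Finset.mul_sum]
        exact Finset.sum_congr rfl fun θ _ => by ring
      rw [e0]
      simp only [hlogw]
      have e1 : ∑ θ, q θ * (α₁ * ∑ i, β i * Real.log (p i θ) + (α₂ / n) * ∑ i, Real.log (l i θ))
          = α₁ * (∑ θ, q θ * ∑ i, β i * Real.log (p i θ))
            + (α₂ / n) * (∑ θ, q θ * ∑ i, Real.log (l i θ)) := by
        rw [Finset.mul_sum, Finset.mul_sum, ← Finset.sum_add_distrib]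
        exact Finset.sum_congr rfl fun θ _ => by ring
      rw [e1]
      congr 1
      · congr 1
        simp_rw [Finset.mul_sum]
        rw [Finset.sum_comm]
        exact Finset.sum_congr rfl fun i _ => Finset.sum_congr rfl fun θ _ => by ring
      · congr 1
        simp_rw [Finset.mul_sum]
        rw [Finset.sum_comm]
    -- RHS
    have hD : ∑ θ, q θ * Real.log (q θ / qstar θ) = S - T + Real.log Z := by
      rw [hsplit q qstar hq hqpos]
      have : ∑ θ, q θ * Real.log (qstar θ) = T - Real.log Z := by
        rw [hqw]
        simp only
        have : ∀ θ, q θ * Real.log (w θ / Z) = q θ * Real.log (w θ) - q θ * Real.log Z := by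
          intro θ; rw [Real.log_div (hw θ).ne' hZ.ne']; ring
        simp only [this, Finset.sum_sub_distrib, ← Finset.sum_mul, hqs, hT, one_mul]
      rw [this]; ring
    rw [hL, ← hcT, hD]; ring
  have hDstar : ∑ θ, qstar θ * Real.log (qstar θ / qstar θ) = 0 := by
    refine Finset.sum_eq_zero fun θ _ => ?_
    rw [div_self (hqpos θ).ne', Real.log_one, mul_zero]
  constructor
  · intro q hq hqs
    rw [key q hq hqs, key qstar (fun θ => (hqpos θ).le) hqsum, hDstar]
    have h := (gibbs' q qstar hq hqpos (by rw [hqs, hqsum])).1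
    nlinarith
  · intro q hq hqs heq
    rw [key q hq hqs, key qstar (fun θ => (hqpos θ).le) hqsum, hDstar] at heq
    have hD0 : ∑ θ, q θ * Real.log (q θ / qstar θ) = 0 := by
      have hcz : c * ∑ θ, q θ * Real.log (q θ / qstar θ) = 0 := by linarith
      exact (mul_eq_zero.mp hcz).resolve_left hc.ne'
    exact (gibbs' q qstar hq hqpos (by rw [hqs, hqsum])).2 hD0
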